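/- Let M(α) be the Λ₁-module k² with α(x,y) = (0,x) and δ = 0. Then: (i) End_{Λ₁}(M(α)) is two-dimensional over k, spanned by the identity and the nilpotent endomorphism ν(x,y) = (0,x); (ii) ν factors through the projective (free rank-one) Λ₁-module Λ₁: explicitly ν = h∘g where g : M(α) → Λ₁, g(x,y) = xα + yα², and h : Λ₁ → M(α) is the Λ₁-homomorphism with h(1) = (1,0); (iii) the identity of M(α) does not factor through any projective Λ₁-module. Consequently the stable endomorphism ring of M(α) is isomorphic to k. -/

import Mathlib

/-! Common framework: modules over the generalized Brauer star algebra with one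
edge, `Λ₁ = k⟨α,δ⟩/(αδ, δα, α² − δ²)`, encoded as a module `V` together with two
endomorphisms `A` (the action of `α`) and `D` (the action of `δ`). -/

namespace GBTAone

structure Mod1 (R : Type) [CommRing R] : Type 1 where
  V : Type
  [instAdd : AddCommGroup V]
  [instMod : Module R V]
  A : Module.End R V
  D : Module.End R V

attribute [instance] Mod1.instAdd Mod1.instMod

variable {R : Type} [CommRing R]

/-- The defining relations of `Λ₁`: `αδ = δα = 0` and `α² = δ²`. -/
def Satisfies1 (ρ : Mod1 R) : Prop :=
  ρ.A * ρ.D = 0 ∧ ρ.D * ρ.A = 0 ∧ ρ.A * ρ.A = ρ.D * ρ.D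

/-- The space of `Λ₁`-module homomorphisms `ρ → σ`. -/
def homSet1 (ρ σ : Mod1 R) : Submodule R (ρ.V →ₗ[R] σ.V) where
  carrier := {f | f ∘ₗ ρ.A = σ.A ∘ₗ f ∧ f ∘ₗ ρ.D = σ.D ∘ₗ f}
  add_mem' := by
    rintro f g ⟨hfa, hfd⟩ ⟨hga, hgd⟩
    exact ⟨by simp only [LinearMap.add_comp, LinearMap.comp_add, hfa, hga],
      by simp only [LinearMap.add_comp, LinearMap.comp_add, hfd, hgd]⟩
  zero_mem' := ⟨by simp, by simp⟩
  smul_mem' := by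
    rintro c f ⟨hfa, hfd⟩
    exact ⟨by simp only [LinearMap.smul_comp, LinearMap.comp_smul, hfa],
      by simp only [LinearMap.smul_comp, LinearMap.comp_smul, hfd]⟩

/-- Projectivity of a `Λ₁`-module, via the lifting property in the category of
`Λ₁`-modules. -/
def IsProjective1 (P : Mod1 R) : Prop :=
  Satisfies1 P ∧
  ∀ (A B : Mod1 R), Satisfies1 A → Satisfies1 B →
    ∀ p ∈ homSet1 A B, Function.Surjective p →
      ∀ g ∈ homSet1 P B, ∃ h ∈ homSet1 P A, p ∘ₗ h = g

/-- An endomorphism `f` of `ρ` factors through a projective `Λ₁`-module. -/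
def FactorsThroughProjective1 (ρ : Mod1 R) (f : ρ.V →ₗ[R] ρ.V) : Prop :=
  ∃ P : Mod1 R, IsProjective1 P ∧ ∃ g ∈ homSet1 ρ P, ∃ h ∈ homSet1 P ρ, f = h ∘ₗ g

/-- "The stable endomorphism ring of `ρ` is isomorphic to the scalars". -/
def StableEndIsoScalars1 (ρ : Mod1 R) : Prop :=
  (¬ FactorsThroughProjective1 ρ LinearMap.id) ∧
  ∀ f ∈ homSet1 ρ ρ, ∃ c : R, FactorsThroughProjective1 ρ (f - c • LinearMap.id)

/-- The linear map on `Fin m → W` sending the `src` coordinate to the `dst`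
coordinate through `g`, and killing all other coordinates. -/
def mk1 {m : ℕ} {W : Type} [AddCommGroup W] [Module R W] (src dst : Fin m)
    (g : W →ₗ[R] W) : (Fin m → W) →ₗ[R] (Fin m → W) where
  toFun x := fun r => if r = dst then g (x src) else 0
  map_add' x y := by funext r; by_cases h : r = dst <;> simp [h]
  map_smul' c x := by funext r; by_cases h : r = dst <;> simp [h]

/-- The map `(x, y) ↦ (0, x)` on `W × W`. -/
def sh (R W : Type) [CommRing R] [AddCommGroup W] [Module R W] :
    (W × W) →ₗ[R] (W × W) :=
  LinearMap.prod 0 (LinearMap.fst R W W)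

/-- The module `M(α)`: `k²` with `α(x,y) = (0,x)` and `δ = 0`. -/
@[reducible] def Malpha (k : Type) [CommRing k] : Mod1 k where
  V := k × k
  A := sh k k
  D := 0

/-- The module `M(δ)`: `k²` with `δ(x,y) = (0,x)` and `α = 0`. -/
@[reducible] def Mdelta (k : Type) [CommRing k] : Mod1 k where
  V := k × k
  A := 0
  D := sh k k

/-- The regular module `Λ₁`, with basis `1, α, δ, α²` (coordinates `0,1,2,3`). -/
@[reducible] def reg (k : Type) [CommRing k] : Mod1 k where
  V := Fin 4 → k
  A := mk1 0 1 LinearMap.id + mk1 1 3 LinearMap.id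
  D := mk1 0 2 LinearMap.id + mk1 2 3 LinearMap.id

/-- The simple `Λ₁`-module `S₁`. -/
@[reducible] def S1 (k : Type) [CommRing k] : Mod1 k where
  V := k
  A := 0
  D := 0


/-- The map `g : M(α) → Λ₁`, `(x,y) ↦ x·α + y·α²`. -/
def g6 (k : Type) [CommRing k] : (k × k) →ₗ[k] (Fin 4 → k) where
  toFun p := fun r => if r = 1 then p.1 else if r = 3 then p.2 else 0
  map_add' p q := by
    funext r; by_cases h1 : r = 1 <;> by_cases h3 : r = 3 <;> simp [h1, h3]
  map_smul' c p := by
    funext r; by_cases h1 : r = 1 <;> by_cases h3 : r = 3 <;> simp [h1, h3]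

/-- The `Λ₁`-homomorphism `h : Λ₁ → M(α)` with `h(1) = (1,0)`. -/
def h6 (k : Type) [CommRing k] : (Fin 4 → k) →ₗ[k] (k × k) :=
  LinearMap.prod (LinearMap.proj 0) (LinearMap.proj 1)


/-! ### Auxiliary lemmas -/

lemma mem_homSet1 {ρ σ : Mod1 R} {f : ρ.V →ₗ[R] σ.V} :
    f ∈ homSet1 ρ σ ↔ f ∘ₗ ρ.A = σ.A ∘ₗ f ∧ f ∘ₗ ρ.D = σ.D ∘ₗ f := Iff.rfl

lemma comp_mem_homSet1 {ρ σ τ : Mod1 R} {f : σ.V →ₗ[R] τ.V} {g : ρ.V →ₗ[R] σ.V}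
    (hf : f ∈ homSet1 σ τ) (hg : g ∈ homSet1 ρ σ) : f ∘ₗ g ∈ homSet1 ρ τ := by
  obtain ⟨hfa, hfd⟩ := hf; obtain ⟨hga, hgd⟩ := hg
  refine ⟨?_, ?_⟩
  · rw [LinearMap.comp_assoc, hga, ← LinearMap.comp_assoc, hfa, LinearMap.comp_assoc]
  · rw [LinearMap.comp_assoc, hgd, ← LinearMap.comp_assoc, hfd, LinearMap.comp_assoc]

lemma sh_apply (k : Type) [CommRing k] (p : k × k) : sh k k p = (0, p.1) := rfl

lemma malpha_satisfies (k : Type) [CommRing k] : Satisfies1 (Malpha k) := by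
  refine ⟨mul_zero _, zero_mul _, ?_⟩
  apply LinearMap.ext; intro p
  simp [Malpha, Module.End.mul_apply, sh_apply, Prod.ext_iff]

lemma reg_satisfies (k : Type) [CommRing k] : Satisfies1 (reg k) := by
  refine ⟨?_, ?_, ?_⟩ <;>
  · apply LinearMap.ext; intro x; funext r
    fin_cases r <;> (simp [reg, mk1, Module.End.mul_apply]; try rfl)

/-- The standard basis vectors of `Fin 4 → k`. -/
def e4 (k : Type) [CommRing k] (i : Fin 4) : Fin 4 → k := Pi.single i 1

lemma e4_decomp (k : Type) [CommRing k] (x : Fin 4 → k) :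
    x = x 0 • e4 k 0 + x 1 • e4 k 1 + x 2 • e4 k 2 + x 3 • e4 k 3 := by
  funext r; fin_cases r <;> simp [e4, Pi.single_apply]

lemma regA_e0 (k : Type) [CommRing k] : (reg k).A (e4 k 0) = e4 k 1 := by
  funext r; fin_cases r <;> simp [reg, mk1, e4, Pi.single_apply]

lemma regA_e1 (k : Type) [CommRing k] : (reg k).A (e4 k 1) = e4 k 3 := by
  funext r; fin_cases r <;> simp [reg, mk1, e4, Pi.single_apply]

lemma regD_e0 (k : Type) [CommRing k] : (reg k).D (e4 k 0) = e4 k 2 := by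
  funext r; fin_cases r <;> simp [reg, mk1, e4, Pi.single_apply]

lemma regA_apply (k : Type) [CommRing k] (x : Fin 4 → k) (r : Fin 4) :
    (reg k).A x r = (if r = 1 then x 0 else 0) + (if r = 3 then x 1 else 0) := rfl

lemma regD_apply (k : Type) [CommRing k] (x : Fin 4 → k) (r : Fin 4) :
    (reg k).D x r = (if r = 2 then x 0 else 0) + (if r = 3 then x 2 else 0) := rfl

lemma reg_projective (k : Type) [CommRing k] : IsProjective1 (reg k) := by
  refine ⟨reg_satisfies k, ?_⟩
  rintro A B hA hB p ⟨hpa, hpd⟩ hps g ⟨hga, hgd⟩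
  obtain ⟨a, ha⟩ := hps (g (e4 k 0))
  set b := g (e4 k 0) with hb
  -- relations in A, pointwise
  have hAD : ∀ v, A.A (A.D v) = 0 := fun v => by
    have := LinearMap.ext_iff.mp hA.1 v; simpa [Module.End.mul_apply] using this
  have hDA : ∀ v, A.D (A.A v) = 0 := fun v => by
    have := LinearMap.ext_iff.mp hA.2.1 v; simpa [Module.End.mul_apply] using this
  have hAA : ∀ v, A.A (A.A v) = A.D (A.D v) := fun v => by
    have := LinearMap.ext_iff.mp hA.2.2 v; simpa [Module.End.mul_apply] using this
  have hDDD : A.D (A.D (A.D a)) = 0 := by rw [← hAA a]; exact hDA _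
  -- the lift
  refine ⟨(LinearMap.proj 0 : (Fin 4 → k) →ₗ[k] k).smulRight a
    + (LinearMap.proj 1).smulRight (A.A a)
    + (LinearMap.proj 2).smulRight (A.D a)
    + (LinearMap.proj 3).smulRight (A.A (A.A a)), ⟨?_, ?_⟩, ?_⟩
  · apply LinearMap.ext; intro x
    simp [LinearMap.comp_apply, regA_apply, mk1, map_add, map_smul, hAD, hAA]
  · apply LinearMap.ext; intro x
    simp [LinearMap.comp_apply, regD_apply, mk1, map_add, map_smul, hDA, hAA, hDDD]
  · apply LinearMap.ext; intro x
    have hpA : ∀ v, p (A.A v) = B.A (p v) := fun v => LinearMap.ext_iff.mp hpa v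
    have hpD : ∀ v, p (A.D v) = B.D (p v) := fun v => LinearMap.ext_iff.mp hpd v
    have hgA : ∀ v, g ((reg k).A v) = B.A (g v) := fun v => LinearMap.ext_iff.mp hga v
    have hgD : ∀ v, g ((reg k).D v) = B.D (g v) := fun v => LinearMap.ext_iff.mp hgd v
    have hg1 : g (e4 k 1) = B.A b := by rw [← regA_e0, hgA]
    have hg2 : g (e4 k 2) = B.D b := by rw [← regD_e0, hgD]
    have hg3 : g (e4 k 3) = B.A (B.A b) := by rw [← regA_e1, hgA, hg1]
    calc p _ = x 0 • b + x 1 • B.A b + x 2 • B.D b + x 3 • B.A (B.A b) := by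
          simp [map_add, map_smul, ha, hpA, hpD]
      _ = g x := by
          conv_rhs => rw [e4_decomp k x]
          simp [map_add, map_smul, hg1, hg2, hg3]
          rfl

lemma id_mem_homSet1 (k : Type) [CommRing k] :
    (LinearMap.id : k × k →ₗ[k] k × k) ∈ homSet1 (Malpha k) (Malpha k) :=
  ⟨by simp, by simp⟩

lemma sh_mem_homSet1 (k : Type) [CommRing k] :
    sh k k ∈ homSet1 (Malpha k) (Malpha k) :=
  ⟨rfl, by simp [Malpha]⟩

lemma endo_form (k : Type) [CommRing k] (f : k × k →ₗ[k] k × k)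
    (hf : f ∈ homSet1 (Malpha k) (Malpha k)) :
    f = (f (1, 0)).1 • LinearMap.id + (f (1, 0)).2 • sh k k := by
  have key : f (0, 1) = (0, (f (1, 0)).1) := by
    have h := LinearMap.ext_iff.mp hf.1 (1, 0)
    simpa [Malpha, sh_apply, LinearMap.comp_apply] using h
  apply LinearMap.ext; intro p
  have hp : p = p.1 • ((1 : k), (0 : k)) + p.2 • ((0 : k), (1 : k)) := by
    ext <;> simp
  rw [hp]
  simp only [map_add, map_smul, key, LinearMap.add_apply, LinearMap.smul_apply,
    LinearMap.id_apply, sh_apply]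
  ext <;> simp [mul_comm] <;> ring

lemma g6_mem (k : Type) [CommRing k] : g6 k ∈ homSet1 (Malpha k) (reg k) := by
  refine ⟨?_, ?_⟩
  · apply LinearMap.ext; intro p; funext r
    fin_cases r <;> simp [g6, Malpha, reg, mk1, sh_apply, LinearMap.comp_apply]
  · apply LinearMap.ext; intro p; funext r
    fin_cases r <;> simp [g6, Malpha, reg, mk1, LinearMap.comp_apply]

lemma h6_mem (k : Type) [CommRing k] : h6 k ∈ homSet1 (reg k) (Malpha k) := by
  refine ⟨?_, ?_⟩
  · apply LinearMap.ext; intro x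
    simp [h6, Malpha, mk1, sh_apply, LinearMap.comp_apply, regA_apply, Prod.ext_iff]
  · apply LinearMap.ext; intro x
    simp [h6, Malpha, mk1, LinearMap.comp_apply, regD_apply, Prod.ext_iff]

lemma sh_eq_h6_g6 (k : Type) [CommRing k] : sh k k = h6 k ∘ₗ g6 k := by
  apply LinearMap.ext; intro p
  simp [h6, g6, sh_apply, LinearMap.comp_apply, Prod.ext_iff]

lemma h6_surjective (k : Type) [CommRing k] : Function.Surjective (h6 k) := by
  intro q
  refine ⟨fun r => if r = 0 then q.1 else if r = 1 then q.2 else 0, ?_⟩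
  simp [h6, Prod.ext_iff]

lemma id_not_factors (k : Type) [Field k] :
    ¬ FactorsThroughProjective1 (Malpha k) LinearMap.id := by
  rintro ⟨P, ⟨hPsat, hPlift⟩, g, hg, h, hh, hid⟩
  obtain ⟨h', hh', hph'⟩ := hPlift (reg k) (Malpha k) (reg_satisfies k)
    (malpha_satisfies k) (h6 k) (h6_mem k) (h6_surjective k) h hh
  have ht : h' ∘ₗ g ∈ homSet1 (Malpha k) (reg k) := comp_mem_homSet1 hh' hg
  have htid : h6 k ∘ₗ (h' ∘ₗ g) = LinearMap.id := by
    rw [← LinearMap.comp_assoc, hph', ← hid]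
  set t := h' ∘ₗ g with hts
  -- t commutes with δ, whose action on M(α) is 0
  have hD : (reg k).D ∘ₗ t = 0 := by
    have := ht.2
    simpa [Malpha] using this.symm
  have h0 : (reg k).D (t (1, 0)) = 0 := by
    have := LinearMap.ext_iff.mp hD (1, 0); simpa using this
  have h1 : t (1, 0) 0 = 1 := by
    have h := LinearMap.ext_iff.mp htid (1, 0)
    have h' : (t (1, 0) 0, t (1, 0) 1) = ((1 : k), (0 : k)) := h
    exact (Prod.ext_iff.mp h').1
  have hz : (0 : (reg k).V) 2 = 0 := rfl
  have h2 := congrFun h0 2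
  rw [regD_apply, hz] at h2
  simp [h1] at h2

lemma factors_smul_sh (k : Type) [CommRing k] (c : k) :
    FactorsThroughProjective1 (Malpha k) (c • sh k k) := by
  refine ⟨reg k, reg_projective k, c • g6 k,
    Submodule.smul_mem _ c (g6_mem k), h6 k, h6_mem k, ?_⟩
  rw [LinearMap.comp_smul, ← sh_eq_h6_g6]

/-- The evaluation map `End(M(α)) → k²`, `f ↦ f(1,0)`. -/
def ev1 (k : Type) [CommRing k] : (homSet1 (Malpha k) (Malpha k)) →ₗ[k] k × k where
  toFun f := f.1 (1, 0)
  map_add' f g := rfl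
  map_smul' c f := rfl

lemma ev1_bijective (k : Type) [Field k] : Function.Bijective (ev1 k) := by
  constructor
  · intro f g hfg
    have hf := endo_form k f.1 f.2
    have hg := endo_form k g.1 g.2
    apply Subtype.ext
    rw [hf, hg]
    have : (f.1 (1, 0)) = (g.1 (1, 0)) := hfg
    rw [this]
  · rintro ⟨a, c⟩
    refine ⟨⟨a • LinearMap.id + c • sh k k,
      Submodule.add_mem _ (Submodule.smul_mem _ a (id_mem_homSet1 k))
        (Submodule.smul_mem _ c (sh_mem_homSet1 k))⟩, ?_⟩
    simp [ev1, sh_apply, Prod.ext_iff]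

lemma finrank_end (k : Type) [Field k] :
    Module.finrank k (homSet1 (Malpha k) (Malpha k)) = 2 := by
  rw [(LinearEquiv.ofBijective (ev1 k) (ev1_bijective k)).finrank_eq]
  simp [Module.finrank_prod]

/-- `End_{Λ₁}(M(α))` is two-dimensional, spanned by the identity
and the nilpotent endomorphism `ν(x,y) = (0,x)`; `ν` factors through the
projective free rank-one module `Λ₁` as `ν = h ∘ g`; the identity of `M(α)` does
not factor through any projective `Λ₁`-module; consequently the stable
endomorphism ring of `M(α)` is isomorphic to `k`. -/
theorem Malpha_stable_end (k : Type) [Field k] :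
    (Module.finrank k (homSet1 (Malpha k) (Malpha k)) = 2 ∧
      ∀ f ∈ homSet1 (Malpha k) (Malpha k), ∃ c₁ c₂ : k,
        f = c₁ • LinearMap.id + c₂ • sh k k) ∧
    (IsProjective1 (reg k) ∧ g6 k ∈ homSet1 (Malpha k) (reg k) ∧
      h6 k ∈ homSet1 (reg k) (Malpha k) ∧ sh k k = h6 k ∘ₗ g6 k) ∧
    (¬ FactorsThroughProjective1 (Malpha k) LinearMap.id) ∧
    StableEndIsoScalars1 (Malpha k) := by
  refine ⟨⟨finrank_end k, fun f hf => ⟨(f (1, 0)).1, (f (1, 0)).2, endo_form k f hf⟩⟩,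
    ⟨reg_projective k, g6_mem k, h6_mem k, sh_eq_h6_g6 k⟩,
    id_not_factors k, id_not_factors k, fun f hf => ?_⟩
  obtain ⟨c₁, c₂, h⟩ : ∃ c₁ c₂ : k, f = c₁ • LinearMap.id + c₂ • sh k k :=
    ⟨_, _, endo_form k f hf⟩
  exact ⟨c₁, by rw [h, add_sub_cancel_left]; exact factors_smul_sh k c₂⟩

end GBTAone
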